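/- arXiv:1904.08891 — 5 statements merged into one kernel-verified Lean document; each statement's English description precedes it below -/
import Mathlib

section
/- For every real y ≥ 0, the inequalities (1 - e^{-y/2})² ≤ 1 - (1+y)·e^{-y} ≤ 2·(1 - e^{-y/2})² hold. -/
/-- Key auxiliary inequality: `2(e^x - 1) ≤ x(e^x + 1)` for `x ≥ 0`. -/
lemma key_exp_ineq (x : ℝ) (hx : 0 ≤ x) :
    2 * (Real.exp x - 1) ≤ x * (Real.exp x + 1) := by
  set f : ℝ → ℝ := fun w => w * Real.exp w + w + 2 - 2 * Real.exp w with hf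
  have hderiv : ∀ z : ℝ, HasDerivAt f ((z - 1) * Real.exp z + 1) z := by
    intro z
    have h1 : HasDerivAt (fun w : ℝ => w * Real.exp w)
        (1 * Real.exp z + z * Real.exp z) z :=
      (hasDerivAt_id z).mul (Real.hasDerivAt_exp z)
    have h2 : HasDerivAt (fun w : ℝ => 2 * Real.exp w) (2 * Real.exp z) z :=
      (Real.hasDerivAt_exp z).const_mul 2
    have := ((h1.add (hasDerivAt_id z)).add_const 2).sub h2
    convert this using 1
    · rfl
    · rfl
    · rfl
    · ring
  have hmono : MonotoneOn f (Set.Ici (0:ℝ)) := by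
    apply monotoneOn_of_deriv_nonneg (convex_Ici 0)
    · exact (Continuous.continuousOn (by continuity))
    · intro z _
      exact (hderiv z).differentiableAt.differentiableWithinAt
    · intro z hz
      rw [(hderiv z).deriv]
      have h := Real.add_one_le_exp (-z)
      have hp := (Real.exp_pos z).le
      have hm : (-z + 1) * Real.exp z ≤ Real.exp (-z) * Real.exp z :=
        mul_le_mul_of_nonneg_right h hp
      rw [← Real.exp_add, neg_add_cancel, Real.exp_zero] at hm
      nlinarith
  have h0 : f 0 ≤ f x := hmono (Set.self_mem_Ici) hx hx
  simp only [hf, Real.exp_zero] at h0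
  nlinarith [h0]

/-- For all `y ≥ 0`: `(1 - e^{-y/2})² ≤ 1 - (1+y)·e^{-y} ≤ 2·(1 - e^{-y/2})²`. -/
theorem stmt3 (y : ℝ) (hy : 0 ≤ y) :
    (1 - Real.exp (-(y / 2))) ^ 2 ≤ 1 - (1 + y) * Real.exp (-y) ∧
    1 - (1 + y) * Real.exp (-y) ≤ 2 * (1 - Real.exp (-(y / 2))) ^ 2 := by
  set t := Real.exp (-(y / 2)) with ht
  have htpos : 0 < t := Real.exp_pos _
  have ht1 : t ≤ 1 := Real.exp_le_one_iff.mpr (by linarith)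
  have hey : Real.exp (-y) = t ^ 2 := by
    rw [ht, ← Real.exp_nat_mul]
    norm_num
    ring_nf
  -- From 1 + y/2 ≤ e^{y/2}: t * (1 + y/2) ≤ 1
  have h1 : t * (1 + y / 2) ≤ 1 := by
    have h := Real.add_one_le_exp (y / 2)
    have hb : Real.exp (y / 2) * t = 1 := by
      rw [ht, ← Real.exp_add, add_neg_cancel, Real.exp_zero]
    nlinarith
  -- From key: 2(1 - t) ≤ (y/2)(1 + t)
  have h2 : 2 * (1 - t) ≤ (y / 2) * (1 + t) := by
    have h := key_exp_ineq (y / 2) (by linarith)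
    have hb : Real.exp (y / 2) * t = 1 := by
      rw [ht, ← Real.exp_add, add_neg_cancel, Real.exp_zero]
    nlinarith [mul_le_mul_of_nonneg_right h htpos.le]
  constructor
  · rw [hey]; nlinarith [sq_nonneg t, mul_pos htpos htpos]
  · rw [hey]
    have h3 : (2 * (1 - t)) * t ^ 2 ≤ ((y / 2) * (1 + t)) * t ^ 2 :=
      mul_le_mul_of_nonneg_right h2 (sq_nonneg t)
    nlinarith [mul_nonneg (mul_nonneg (sub_nonneg.2 ht1) (sub_nonneg.2 ht1)) (sub_nonneg.2 ht1)]
end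

section
/- For 0 < p < 1 and t ≥ 0 with p(1+t) ≤ 1, the binary relative entropy satisfies H(p(1+t) | p) ≥ p·t²/(2+t), where H(x|p) = x·log(x/p) + (1-x)·log((1-x)/(1-p)). -/
private lemma aux_log_ge (t : ℝ) (ht : 0 ≤ t) : 2 * t / (2 + t) ≤ Real.log (1 + t) := by
  set f : ℝ → ℝ := fun x => Real.log (1 + x) - 2 * x / (2 + x) with hf
  have hderiv : ∀ s : ℝ, 0 < s → HasDerivAt f (1 / (1 + s) - 4 / (2 + s) ^ 2) s := by
    intro s hs
    have h1 : (1 : ℝ) + s ≠ 0 := by linarith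
    have h2 : (2 : ℝ) + s ≠ 0 := by linarith
    have hlog : HasDerivAt (fun x : ℝ => Real.log (1 + x)) (1 / (1 + s)) s := by
      have := ((hasDerivAt_id s).const_add 1).log h1
      simpa using this
    have hdiv : HasDerivAt (fun x : ℝ => 2 * x / (2 + x)) (4 / (2 + s) ^ 2) s := by
      have hn : HasDerivAt (fun x : ℝ => 2 * x) 2 s := by
        simpa using (hasDerivAt_id s).const_mul 2
      have hd : HasDerivAt (fun x : ℝ => 2 + x) 1 s := by
        simpa using (hasDerivAt_id s).const_add 2
      have := hn.div hd h2
      refine this.congr_deriv ?_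
      ring
    exact hlog.sub hdiv
  have hmono : MonotoneOn f (Set.Ici (0 : ℝ)) := by
    apply monotoneOn_of_deriv_nonneg (convex_Ici 0)
    · apply ContinuousOn.sub
      · apply ContinuousOn.log (by fun_prop)
        intro x hx; simp at hx; intro h; linarith
      · apply ContinuousOn.div (by fun_prop) (by fun_prop)
        intro x hx; simp at hx; intro h; linarith
    · intro s hs
      rw [interior_Ici] at hs
      exact ((hderiv s hs).differentiableAt).differentiableWithinAt
    · intro s hs
      rw [interior_Ici] at hs
      have hs' : 0 < s := hs
      rw [(hderiv s hs').deriv]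
      have h1 : (0:ℝ) < 1 + s := by linarith
      have h2 : (0:ℝ) < (2 + s) ^ 2 := by positivity
      rw [sub_nonneg, div_le_div_iff₀ h2 h1]
      nlinarith
  have h0 : f 0 = 0 := by simp [hf]
  have := hmono (Set.self_mem_Ici) (Set.mem_Ici.mpr ht) ht
  rw [h0] at this
  simp only [hf] at this
  linarith

private lemma aux_second (p x : ℝ) (hp1 : p < 1) (hx : x ≤ 1) :
    p - x ≤ (1 - x) * Real.log ((1 - x) / (1 - p)) := by
  rcases eq_or_lt_of_le hx with h | h
  · subst h; simp; linarith
  · have h1x : 0 < 1 - x := by linarith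
    have h1p : 0 < 1 - p := by linarith
    have hpos : 0 < (1 - p) / (1 - x) := by positivity
    have := Real.log_le_sub_one_of_pos hpos
    have hlog : Real.log ((1 - x) / (1 - p)) = - Real.log ((1 - p) / (1 - x)) := by
      rw [← Real.log_inv]; congr 1; field_simp
    rw [hlog]
    have : 1 - (1 - p) / (1 - x) ≤ - Real.log ((1 - p) / (1 - x)) := by linarith
    calc p - x = (1 - x) * (1 - (1 - p) / (1 - x)) := by field_simp; ring
    _ ≤ (1 - x) * (- Real.log ((1 - p) / (1 - x))) := by
        exact mul_le_mul_of_nonneg_left this (le_of_lt h1x)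

/-- For `0 < p < 1`, `t ≥ 0` with `p(1+t) ≤ 1`, the binary relative entropy satisfies
`H(p(1+t)|p) ≥ p·t²/(2+t)`. -/
theorem stmt5 (p t : ℝ) (hp0 : 0 < p) (hp1 : p < 1) (ht : 0 ≤ t) (hpt : p * (1 + t) ≤ 1) :
    p * t ^ 2 / (2 + t) ≤
      p * (1 + t) * Real.log ((p * (1 + t)) / p)
        + (1 - p * (1 + t)) * Real.log ((1 - p * (1 + t)) / (1 - p)) := by
  have h2t : (0:ℝ) < 2 + t := by linarith
  have hrw : (p * (1 + t)) / p = 1 + t := by field_simp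
  rw [hrw]
  have h1 := aux_log_ge t ht
  have h2 := aux_second p (p * (1 + t)) hp1 hpt
  have hfirst : p * (1 + t) * (2 * t / (2 + t)) ≤ p * (1 + t) * Real.log (1 + t) := by
    apply mul_le_mul_of_nonneg_left h1
    nlinarith
  have key : p * t ^ 2 / (2 + t) = p * (1 + t) * (2 * t / (2 + t)) + (p - p * (1 + t)) := by
    field_simp
    ring
  rw [key]
  have := add_le_add hfirst h2
  linarith
end

section
/- Let 0 ≤ p ≤ 1 and let ℓ ≥ 2 be an even integer. Then P(Bin(ℓ,p) < ℓ/2) + (1/2)·P(Bin(ℓ,p) = ℓ/2) = P(Bin(ℓ-1,p) < (ℓ-1)/2). -/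
lemma sum_ite_range_aux (f : ℕ → ℝ) (N m : ℕ) (hm : m ≤ N) (P : ℕ → Prop) [DecidablePred P]
    (hP : ∀ k < N, (P k ↔ k < m)) :
    ∑ k ∈ Finset.range N, (if P k then f k else 0) = ∑ k ∈ Finset.range m, f k := by
  rw [← Finset.sum_subset (Finset.range_subset_range.mpr hm)
      (fun x hx hx' => by
        rw [if_neg]
        rw [hP x (Finset.mem_range.mp hx)]
        simpa using hx')]
  exact Finset.sum_congr rfl (fun k hk => by
    rw [if_pos]
    rw [hP k (lt_of_lt_of_le (Finset.mem_range.mp hk) hm)]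
    exact Finset.mem_range.mp hk)

lemma sum_pascal_aux (p q : ℝ) (N : ℕ) :
    ∀ n, n ≤ N →
      ∑ k ∈ Finset.range (n + 1), ((N + 1).choose k : ℝ) * p ^ k * q ^ (N + 1 - k)
        = q * ∑ k ∈ Finset.range (n + 1), (N.choose k : ℝ) * p ^ k * q ^ (N - k)
          + p * ∑ k ∈ Finset.range n, (N.choose k : ℝ) * p ^ k * q ^ (N - k) := by
  intro n
  induction n with
  | zero =>
    intro _
    simp [pow_succ]
    ring
  | succ n ih =>
    intro hn
    have hn' : n ≤ N := Nat.le_of_succ_le hn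
    rw [Finset.sum_range_succ, ih hn', Finset.sum_range_succ (n := n + 1),
      Finset.sum_range_succ (n := n)]
    have hc : ((N + 1).choose (n + 1) : ℝ) = (N.choose n : ℝ) + (N.choose (n + 1) : ℝ) := by
      rw [Nat.choose_succ_succ]
      push_cast
      ring
    have h1 : N + 1 - (n + 1) = N - n := by omega
    have h2 : N - n = (N - (n + 1)) + 1 := by omega
    rw [hc, h1, h2, pow_succ]
    ring

/-- Even-case recursion: for `0 ≤ p ≤ 1` and even `ℓ ≥ 2`,
`P(Bin(ℓ,p) < ℓ/2) + (1/2)·P(Bin(ℓ,p) = ℓ/2) = P(Bin(ℓ-1,p) < (ℓ-1)/2)`. -/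
theorem stmt12 (p : ℝ) (hp0 : 0 ≤ p) (hp1 : p ≤ 1) (ℓ : ℕ) (hℓ : Even ℓ) (hℓ2 : 2 ≤ ℓ) :
    (∑ k ∈ Finset.range (ℓ + 1),
        (if (k : ℝ) < (ℓ : ℝ) / 2 then (ℓ.choose k : ℝ) * p ^ k * (1 - p) ^ (ℓ - k) else 0))
      + (1 / 2) * ((ℓ.choose (ℓ / 2) : ℝ) * p ^ (ℓ / 2) * (1 - p) ^ (ℓ - ℓ / 2))
    = ∑ k ∈ Finset.range ℓ,
        (if (k : ℝ) < ((ℓ : ℝ) - 1) / 2 then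
          ((ℓ - 1).choose k : ℝ) * p ^ k * (1 - p) ^ (ℓ - 1 - k) else 0) := by
  obtain ⟨m, rfl⟩ := hℓ
  have hm : 1 ≤ m := by omega
  set q : ℝ := 1 - p with hq
  -- reduce the LHS ite-sum
  have hL : (∑ k ∈ Finset.range (m + m + 1),
      (if (k : ℝ) < ((m + m : ℕ) : ℝ) / 2 then
        ((m + m).choose k : ℝ) * p ^ k * q ^ (m + m - k) else 0))
      = ∑ k ∈ Finset.range m, ((m + m).choose k : ℝ) * p ^ k * q ^ (m + m - k) := by
    apply sum_ite_range_aux _ _ _ (by omega)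
    intro k _
    rw [show ((m + m : ℕ) : ℝ) / 2 = (m : ℝ) by push_cast; ring]
    exact_mod_cast Iff.rfl
  -- reduce the RHS ite-sum
  have hR : (∑ k ∈ Finset.range (m + m),
      (if (k : ℝ) < (((m + m : ℕ) : ℝ) - 1) / 2 then
        ((m + m - 1).choose k : ℝ) * p ^ k * q ^ (m + m - 1 - k) else 0))
      = ∑ k ∈ Finset.range m, ((m + m - 1).choose k : ℝ) * p ^ k * q ^ (m + m - 1 - k) := by
    apply sum_ite_range_aux _ _ _ (by omega)
    intro k _
    rw [show (((m + m : ℕ) : ℝ) - 1) = ((m + m - 1 : ℕ) : ℝ) by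
        push_cast [Nat.cast_sub (by omega : 1 ≤ m + m)]; ring,
      lt_div_iff₀ (by norm_num : (0:ℝ) < 2)]
    constructor
    · intro h
      have hk2 : k * 2 < m + m - 1 := by exact_mod_cast h
      omega
    · intro h
      have hk2 : k * 2 < m + m - 1 := by omega
      exact_mod_cast hk2
  rw [hL, hR]
  -- apply the Pascal sum lemma with n = m - 1 (so n + 1 = m)
  have key := sum_pascal_aux p q (m + m - 1) (m - 1) (by omega)
  simp only [show m - 1 + 1 = m by omega, show m + m - 1 + 1 = m + m by omega] at key
  have hsplit : (∑ k ∈ Finset.range m, ((m + m - 1).choose k : ℝ) * p ^ k * q ^ (m + m - 1 - k))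
      = (∑ k ∈ Finset.range (m - 1), ((m + m - 1).choose k : ℝ) * p ^ k * q ^ (m + m - 1 - k))
        + ((m + m - 1).choose (m - 1) : ℝ) * p ^ (m - 1) * q ^ (m + m - 1 - (m - 1)) := by
    rw [← Finset.sum_range_succ, show m - 1 + 1 = m by omega]
  have hdiv : (m + m) / 2 = m := by omega
  have hsub : m + m - m = m := by omega
  have hcmid : ((m + m).choose m : ℝ)
      = ((m + m - 1).choose (m - 1) : ℝ) + ((m + m - 1).choose m : ℝ) := by
    have h := Nat.choose_succ_succ (m + m - 1) (m - 1)
    simp only [Nat.succ_eq_add_one] at h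
    rw [show m + m - 1 + 1 = m + m by omega, show m - 1 + 1 = m by omega] at h
    rw [h]; push_cast; ring
  have hsymm : ((m + m - 1).choose m : ℝ) = ((m + m - 1).choose (m - 1) : ℝ) := by
    have h := Nat.choose_symm (by omega : m ≤ m + m - 1)
    rw [show m + m - 1 - m = m - 1 by omega] at h
    rw [h]
  rw [key, hsplit, hdiv, hsub, hcmid, hsymm,
    show m + m - 1 - (m - 1) = m by omega]
  have hp : p ^ m = p ^ (m - 1) * p := by
    rw [← pow_succ, show m - 1 + 1 = m by omega]
  rw [hp, hq]
  ring
end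

section
/- Let 0 ≤ p ≤ 1/2 and ℓ ≥ 0 an integer. Then P(Bin(ℓ+2,p) < (ℓ+2)/2) ≥ P(Bin(ℓ,p) < ℓ/2). -/
open Finset

/-- Partial binomial CDF sum. -/
private def Saux (p : ℝ) (n t : ℕ) : ℝ :=
  ∑ k ∈ Finset.range t, (n.choose k : ℝ) * p ^ k * (1 - p) ^ (n - k)

private lemma Saux_succ (p : ℝ) (n t : ℕ) :
    Saux p n (t + 1) = Saux p n t + (n.choose t : ℝ) * p ^ t * (1 - p) ^ (n - t) :=
  Finset.sum_range_succ _ _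

private lemma Saux_step (p : ℝ) (n t : ℕ) :
    Saux p (n + 1) (t + 1) = (1 - p) * Saux p n (t + 1) + p * Saux p n t := by
  induction t with
  | zero =>
    simp [Saux, Finset.sum_range_one, pow_succ]
    ring
  | succ t ih =>
    rw [Saux_succ p (n+1) (t+1), ih, Saux_succ p n (t+1), Saux_succ p n t]
    have hc : (((n+1).choose (t+1) : ℕ) : ℝ) = n.choose t + n.choose (t+1) := by
      exact_mod_cast congrArg Nat.cast (Nat.choose_succ_succ n t)
    have hsub : n + 1 - (t + 1) = n - t := by omega
    rcases le_or_gt (t + 1) n with h | h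
    · have h2 : n - t = (n - (t + 1)) + 1 := by omega
      rw [hc, hsub, h2]; ring
    · have h1 : (n.choose (t+1) : ℝ) = 0 := by
        rw [Nat.choose_eq_zero_of_lt h]; norm_num
      rw [hc, hsub, h1]; ring

private lemma reduce_sum (f : ℕ → ℝ) (N m : ℕ) (hm : m ≤ N) (c : ℝ)
    (hc : ∀ k : ℕ, ((k : ℝ) < c ↔ k < m)) :
    ∑ k ∈ Finset.range N, (if (k : ℝ) < c then f k else 0) = ∑ k ∈ Finset.range m, f k := by
  have h1 : ∑ k ∈ Finset.range m, (if (k : ℝ) < c then f k else 0)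
      = ∑ k ∈ Finset.range N, (if (k : ℝ) < c then f k else 0) :=
    Finset.sum_subset (Finset.range_subset_range.2 hm)
      (fun k _ hk => if_neg (fun h => hk (Finset.mem_range.2 ((hc k).1 h))))
  rw [← h1]
  exact Finset.sum_congr rfl fun k hk => if_pos ((hc k).2 (Finset.mem_range.1 hk))

/-- For `0 ≤ p ≤ 1/2` and `ℓ ≥ 0`,
`P(Bin(ℓ+2,p) < (ℓ+2)/2) ≥ P(Bin(ℓ,p) < ℓ/2)`. -/
theorem stmt14 (p : ℝ) (hp0 : 0 ≤ p) (hp : p ≤ 1 / 2) (ℓ : ℕ) :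
    ∑ k ∈ Finset.range (ℓ + 1),
        (if (k : ℝ) < (ℓ : ℝ) / 2 then (ℓ.choose k : ℝ) * p ^ k * (1 - p) ^ (ℓ - k) else 0)
    ≤ ∑ k ∈ Finset.range (ℓ + 3),
        (if (k : ℝ) < ((ℓ : ℝ) + 2) / 2 then
          ((ℓ + 2).choose k : ℝ) * p ^ k * (1 - p) ^ (ℓ + 2 - k) else 0) := by
  have hq0 : (0 : ℝ) ≤ 1 - p := by linarith
  have hpq : p ≤ 1 - p := by linarith
  set m := (ℓ + 1) / 2 with hm
  have hL : ∑ k ∈ Finset.range (ℓ + 1),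
      (if (k : ℝ) < (ℓ : ℝ) / 2 then (ℓ.choose k : ℝ) * p ^ k * (1 - p) ^ (ℓ - k) else 0)
      = Saux p ℓ m := by
    apply reduce_sum _ _ _ (by omega)
    intro k
    rw [lt_div_iff₀ (by norm_num : (0:ℝ) < 2)]
    constructor
    · intro h
      have h2 : ((2 * k : ℕ) : ℝ) < (ℓ : ℕ) := by push_cast; linarith
      have := Nat.cast_lt.mp h2
      omega
    · intro h
      have h2 : 2 * k < ℓ := by omega
      have : ((2 * k : ℕ) : ℝ) < (ℓ : ℕ) := Nat.cast_lt.mpr h2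
      push_cast at this; linarith
  have hR : ∑ k ∈ Finset.range (ℓ + 3),
      (if (k : ℝ) < ((ℓ : ℝ) + 2) / 2 then
        ((ℓ + 2).choose k : ℝ) * p ^ k * (1 - p) ^ (ℓ + 2 - k) else 0)
      = Saux p (ℓ + 2) (m + 1) := by
    apply reduce_sum _ _ _ (by omega)
    intro k
    rw [lt_div_iff₀ (by norm_num : (0:ℝ) < 2)]
    constructor
    · intro h
      have h2 : ((2 * k : ℕ) : ℝ) < ((ℓ + 2 : ℕ) : ℝ) := by push_cast; linarith
      have := Nat.cast_lt.mp h2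
      omega
    · intro h
      have h2 : 2 * k < ℓ + 2 := by omega
      have : ((2 * k : ℕ) : ℝ) < ((ℓ + 2 : ℕ) : ℝ) := Nat.cast_lt.mpr h2
      push_cast at this; linarith
  rw [hL, hR]
  rcases Nat.eq_zero_or_pos ℓ with rfl | hl
  · -- m = 0, goal : Saux p 0 0 ≤ Saux p 2 1
    have : m = 0 := by omega
    rw [this]
    simp [Saux, Finset.sum_range_one]
    positivity
  · obtain ⟨n, hn⟩ : ∃ n, m = n + 1 := ⟨m - 1, by omega⟩
    rw [hn]
    have hnl : n + 1 ≤ ℓ := by omega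
    have h2m : 2 * (n + 1) ≤ ℓ + 1 := by omega
    -- choose inequality : C(ℓ,n) ≤ C(ℓ,n+1)
    have hch : ℓ.choose n ≤ ℓ.choose (n + 1) := by
      have hkey := Nat.choose_succ_right_eq ℓ n
      -- ℓ.choose (n+1) * (n+1) = ℓ.choose n * (ℓ - n)
      have hge : n + 1 ≤ ℓ - n := by omega
      have : ℓ.choose n * (n + 1) ≤ ℓ.choose (n + 1) * (n + 1) := by
        rw [hkey]
        exact Nat.mul_le_mul_left _ hge
      exact Nat.le_of_mul_le_mul_right this (Nat.succ_pos n)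
    have hchR : (ℓ.choose n : ℝ) ≤ (ℓ.choose (n + 1) : ℝ) := Nat.cast_le.mpr hch
    have hsub : ℓ - n = (ℓ - (n + 1)) + 1 := by omega
    -- key inequality
    have key : p ^ 2 * ((ℓ.choose n : ℝ) * p ^ n * (1 - p) ^ (ℓ - n))
        ≤ (1 - p) ^ 2 * ((ℓ.choose (n + 1) : ℝ) * p ^ (n + 1) * (1 - p) ^ (ℓ - (n + 1))) := by
      rw [hsub]
      have h1 : (ℓ.choose n : ℝ) * p ≤ (ℓ.choose (n + 1) : ℝ) * (1 - p) :=
        mul_le_mul hchR hpq hp0 (Nat.cast_nonneg _)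
      have h2 : (0 : ℝ) ≤ p ^ (n + 1) * (1 - p) ^ ((ℓ - (n + 1)) + 1) :=
        mul_nonneg (pow_nonneg hp0 _) (pow_nonneg hq0 _)
      calc p ^ 2 * ((ℓ.choose n : ℝ) * p ^ n * (1 - p) ^ ((ℓ - (n + 1)) + 1))
          = ((ℓ.choose n : ℝ) * p) * (p ^ (n + 1) * (1 - p) ^ ((ℓ - (n + 1)) + 1)) := by ring
        _ ≤ ((ℓ.choose (n + 1) : ℝ) * (1 - p)) * (p ^ (n + 1) * (1 - p) ^ ((ℓ - (n + 1)) + 1)) :=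
            mul_le_mul_of_nonneg_right h1 h2
        _ = (1 - p) ^ 2 * ((ℓ.choose (n + 1) : ℝ) * p ^ (n + 1) * (1 - p) ^ (ℓ - (n + 1))) := by
            ring
    -- expand Saux p (ℓ+2) (n+2)
    have expand : Saux p (ℓ + 2) (n + 2)
        = Saux p ℓ (n + 1)
          + ((1 - p) ^ 2 * ((ℓ.choose (n + 1) : ℝ) * p ^ (n + 1) * (1 - p) ^ (ℓ - (n + 1)))
            - p ^ 2 * ((ℓ.choose n : ℝ) * p ^ n * (1 - p) ^ (ℓ - n))) := by
      have e1 : Saux p (ℓ + 2) (n + 2) = (1 - p) * Saux p (ℓ + 1) (n + 2) + p * Saux p (ℓ + 1) (n + 1) :=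
        Saux_step p (ℓ + 1) (n + 1)
      rw [e1, Saux_step p ℓ (n + 1), Saux_step p ℓ n,
        Saux_succ p ℓ (n + 1), Saux_succ p ℓ n, hsub]
      ring
    rw [expand]
    linarith [key]
end

section
/- Let y ∈ ℝ and S₀, S₁ > 0. The 4×4 real matrix M with rows (0, S₀, S₁, 0), (S₀, 0, 0, S₁), (S₁·e^{-y}, 0, 0, S₀), (0, S₁·e^{-y}, S₀, 0) has λ = S₀ + S₁·e^{-y/2} as an eigenvalue, with eigenvector (e^{y/2}, e^{y/2}, 1, 1). Moreover λ is the largest eigenvalue of M. -/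
set_option maxHeartbeats 1000000

/-- The 4×4 stability matrix with rows `(0,S₀,S₁,0)`, `(S₀,0,0,S₁)`,
`(S₁e^{-y},0,0,S₀)`, `(0,S₁e^{-y},S₀,0)` has `λ = S₀ + S₁e^{-y/2}` as an eigenvalue
with eigenvector `(e^{y/2}, e^{y/2}, 1, 1)`, and `λ` is its largest eigenvalue. -/
theorem stmt15 (y S0 S1 : ℝ) (hS0 : 0 < S0) (hS1 : 0 < S1) :
    (Matrix.mulVec
        (!![0, S0, S1, 0;
            S0, 0, 0, S1;
            S1 * Real.exp (-y), 0, 0, S0;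
            0, S1 * Real.exp (-y), S0, 0])
        ![Real.exp (y / 2), Real.exp (y / 2), 1, 1]
      = (S0 + S1 * Real.exp (-(y / 2))) • ![Real.exp (y / 2), Real.exp (y / 2), 1, 1]) ∧
    (∀ (μ : ℂ) (w : Fin 4 → ℂ), w ≠ 0 →
      Matrix.mulVec
          ((!![0, S0, S1, 0;
              S0, 0, 0, S1;
              S1 * Real.exp (-y), 0, 0, S0;
              0, S1 * Real.exp (-y), S0, 0]).map ((↑) : ℝ → ℂ)) w
        = μ • w →
      ‖μ‖ ≤ S0 + S1 * Real.exp (-(y / 2))) := by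
  have hab : Real.exp (-(y / 2)) * Real.exp (y / 2) = 1 := by
    rw [← Real.exp_add]; ring_nf; exact Real.exp_zero
  have hb2 : Real.exp (-y) = Real.exp (-(y / 2)) * Real.exp (-(y / 2)) := by
    rw [← Real.exp_add]; ring_nf
  have hba : Real.exp (-y) * Real.exp (y / 2) = Real.exp (-(y / 2)) := by
    rw [← Real.exp_add]; ring_nf
  constructor
  · funext i
    fin_cases i <;>
      simp [Matrix.mulVec, dotProduct, Fin.sum_univ_four] <;>
      first
        | linear_combination S1 * hab
        | linear_combination S1 * hba
        | linear_combination (-S1) * hab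
        | linear_combination (-S1) * hba
  · intro μ w hw heig
    set b := Real.exp (-(y / 2)) with hbdef
    have hb : 0 < b := Real.exp_pos _
    -- component equations
    have e : ∀ i : Fin 4, Matrix.mulVec ((!![0, S0, S1, 0;
              S0, 0, 0, S1;
              S1 * Real.exp (-y), 0, 0, S0;
              0, S1 * Real.exp (-y), S0, 0]).map ((↑) : ℝ → ℂ)) w i = μ * w i := by
      intro i; rw [heig]; simp
    have e0 := e 0; have e1 := e 1; have e2 := e 2; have e3 := e 3
    simp [Matrix.mulVec, dotProduct, Fin.sum_univ_four, Matrix.map_apply, hb2] at e0 e1 e2 e3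
    set m := ‖μ‖
    set t0 := ‖w 0‖; set t1 := ‖w 1‖
    set t2 := ‖w 2‖; set t3 := ‖w 3‖
    have ht0 : 0 ≤ t0 := norm_nonneg _
    have ht1 : 0 ≤ t1 := norm_nonneg _
    have ht2 : 0 ≤ t2 := norm_nonneg _
    have ht3 : 0 ≤ t3 := norm_nonneg _
    have key : ∀ (z1 z2 : ℂ) (c1 c2 : ℝ) (u : ℂ), 0 ≤ c1 → 0 ≤ c2 →
        μ * u = (c1 : ℂ) * z1 + (c2 : ℂ) * z2 →
        m * ‖u‖ ≤ c1 * ‖z1‖ + c2 * ‖z2‖ := by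
      intro z1 z2 c1 c2 u hc1 hc2 h
      calc m * ‖u‖ = ‖μ * u‖ := (norm_mul _ _).symm
        _ = ‖(c1 : ℂ) * z1 + (c2 : ℂ) * z2‖ := by rw [h]
        _ ≤ ‖(c1 : ℂ) * z1‖ + ‖(c2 : ℂ) * z2‖ :=
            norm_add_le _ _
        _ = c1 * ‖z1‖ + c2 * ‖z2‖ := by
            rw [norm_mul, norm_mul, Complex.norm_real, Complex.norm_real,
              Real.norm_of_nonneg hc1, Real.norm_of_nonneg hc2]
    have i0 : m * t0 ≤ S0 * t1 + S1 * t2 := by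
      refine key _ _ _ _ _ hS0.le hS1.le ?_
      push_cast; linear_combination -e0
    have i1 : m * t1 ≤ S0 * t0 + S1 * t3 := by
      refine key _ _ _ _ _ hS0.le hS1.le ?_
      push_cast; linear_combination -e1
    have i2 : m * t2 ≤ (S1 * (b * b)) * t0 + S0 * t3 := by
      refine key _ _ _ _ _ (by positivity) hS0.le ?_
      push_cast; linear_combination -e2
    have i3 : m * t3 ≤ (S1 * (b * b)) * t1 + S0 * t2 := by
      refine key _ _ _ _ _ (by positivity) hS0.le ?_
      push_cast; linear_combination -e3
    -- Some component is nonzero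
    have hpos : 0 < b * t0 + b * t1 + t2 + t3 := by
      by_contra h
      push_neg at h
      have h0 : t0 = 0 := by nlinarith
      have h1 : t1 = 0 := by nlinarith
      have h2 : t2 = 0 := by nlinarith
      have h3 : t3 = 0 := by nlinarith
      apply hw
      funext j
      fin_cases j
      · exact norm_eq_zero.mp h0
      · exact norm_eq_zero.mp h1
      · exact norm_eq_zero.mp h2
      · exact norm_eq_zero.mp h3
    have i0' := mul_le_mul_of_nonneg_left i0 hb.le
    have i1' := mul_le_mul_of_nonneg_left i1 hb.le
    clear heig e e0 e1 e2 e3 hw key hab hb2 hba i0 i1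
    have hsum : m * (b * t0 + b * t1 + t2 + t3)
        ≤ (S0 + S1 * b) * (b * t0 + b * t1 + t2 + t3) := by
      linarith [i0', i1', i2, i3]
    exact le_of_mul_le_mul_right hsum hpos
end
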